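/- Let E be a real inner product space, let A and B be finite index sets with equal cardinality |A| = |B|, and let u : A → E and v : B → E be families of vectors. Then ‖Σ_{a∈A} u(a) − Σ_{b∈B} v(b)‖² ≤ Σ_{a∈A} Σ_{b∈B} ‖u(a) − v(b)‖². -/

import Mathlib

open Finset

private lemma key_norm_sum_sq {E : Type*} [NormedAddCommGroup E]
    [InnerProductSpace ℝ E] {γ : Type*} (S : Finset γ) (w : γ → E) :
    ‖∑ x ∈ S, w x‖ ^ 2 ≤ (S.card : ℝ) * ∑ x ∈ S, ‖w x‖ ^ 2 := by
  calc ‖∑ x ∈ S, w x‖ ^ 2 ≤ (∑ x ∈ S, ‖w x‖) ^ 2 :=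
        pow_le_pow_left₀ (norm_nonneg _) (norm_sum_le _ _) 2
    _ ≤ (S.card : ℝ) * ∑ x ∈ S, ‖w x‖ ^ 2 := by
        exact_mod_cast sq_sum_le_card_mul_sum_sq (s := S) (f := fun x => ‖w x‖)

/-- For two families of vectors indexed by finite sets of equal cardinality, the
squared distance between the sums is bounded by the sum of squared pairwise
distances: `‖Σ_A u - Σ_B v‖² ≤ Σ_{a∈A} Σ_{b∈B} ‖u a - v b‖²`. -/
theorem norm_sum_sub_sum_sq_le {E : Type*} [NormedAddCommGroup E]
    [InnerProductSpace ℝ E] {α β : Type*} (A : Finset α) (B : Finset β)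
    (u : α → E) (v : β → E) (hcard : A.card = B.card) :
    ‖(∑ a ∈ A, u a) - ∑ b ∈ B, v b‖ ^ 2 ≤
      ∑ a ∈ A, ∑ b ∈ B, ‖u a - v b‖ ^ 2 := by
  have hu := key_norm_sum_sq A u
  have hv := key_norm_sum_sq B v
  have hRHS : ∑ a ∈ A, ∑ b ∈ B, ‖u a - v b‖ ^ 2
      = (B.card : ℝ) * (∑ a ∈ A, ‖u a‖ ^ 2)
        + (A.card : ℝ) * (∑ b ∈ B, ‖v b‖ ^ 2)
        - 2 * inner ℝ (∑ a ∈ A, u a) (∑ b ∈ B, v b) := by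
    simp only [norm_sub_sq_real, Finset.sum_add_distrib, Finset.sum_sub_distrib,
      Finset.sum_const, nsmul_eq_mul, Finset.mul_sum, Finset.sum_mul,
      inner_sum, sum_inner]
    rw [Finset.sum_comm (s := B) (t := A) (f := fun b a => 2 * inner ℝ (u a) (v b))]
    simp_rw [mul_comm (2:ℝ)]
    ring
  have hLHS : ‖(∑ a ∈ A, u a) - ∑ b ∈ B, v b‖ ^ 2
      = ‖∑ a ∈ A, u a‖ ^ 2 + ‖∑ b ∈ B, v b‖ ^ 2
        - 2 * inner ℝ (∑ a ∈ A, u a) (∑ b ∈ B, v b) := by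
    rw [norm_sub_sq_real]; ring
  rw [hcard] at hu
  rw [← hcard] at hv
  rw [hLHS, hRHS]
  linarith
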